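/- Let (G, H) be a pair of dual locally compact abelian groups, ν a measure sequence on H with c_ν defined everywhere, and μ a discrete Borel probability measure on G. If c_ν(g₀ g₁⁻¹) = 1 for every pair of atoms g₀, g₁ of μ, then lim_{N→∞} ∫_H |μ̂(h)|² dν_N(h) = 1. -/

import Mathlib

open MeasureTheory Filter Topology
open scoped ENNReal NNReal

/-- Wiener's lemma, part (3): if `μ` is a discrete Borel probability measure on `G`
(it is concentrated on a countable set) and `c_ν(g₀ g₁⁻¹) = 1` for every pair of atoms
`g₀, g₁` of `μ`, then `lim_N ∫ |μ̂|² dν_N = 1`. -/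
theorem discrete_atoms_extremal
    {G : Type*} [CommGroup G] [TopologicalSpace G] [IsTopologicalGroup G]
    [LocallyCompactSpace G] [MeasurableSpace G] [BorelSpace G]
    [MeasurableSingletonClass G]
    [MeasurableSpace (PontryaginDual G)] [BorelSpace (PontryaginDual G)]
    (ν : ℕ → Measure (PontryaginDual G)) (hν : ∀ N, IsProbabilityMeasure (ν N))
    (c : G → ℂ)
    (hgood : ∀ g : G, Tendsto (fun N => ∫ h, ((h g : ℂ)) ∂ν N) atTop (𝓝 (c g)))
    (μ : Measure G) [IsProbabilityMeasure μ]
    (hdiscrete : ∃ s : Set G, s.Countable ∧ μ s = 1)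
    (hatoms : ∀ g₀ g₁ : G, μ {g₀} ≠ 0 → μ {g₁} ≠ 0 → c (g₀ * g₁⁻¹) = 1) :
    Tendsto (fun N => ∫ h, ‖∫ g, ((h g : ℂ)) ∂μ‖ ^ 2 ∂ν N) atTop (𝓝 1) := by
  obtain ⟨s, hsc, hs1⟩ := hdiscrete
  haveI : Countable s := hsc.to_subtype
  set w : s → ℝ := fun g => (μ {(g : G)}).toReal with hw
  -- continuity of evaluation
  have heval : ∀ g : G, Continuous fun h : PontryaginDual G => ((h g : ℂ)) := by
    intro g
    have h2 : Continuous fun f : C(G, Circle) => f g :=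
      ContinuousEvalConst.continuous_eval_const g
    exact continuous_subtype_val.comp
      (h2.comp (ContinuousMonoidHom.isEmbedding_toContinuousMap G Circle).continuous)
  have hnorm : ∀ (h : PontryaginDual G) (g : G), ‖(h g : ℂ)‖ = 1 := fun h g => Circle.norm_coe _
  have hw_nonneg : ∀ g : s, 0 ≤ w g := fun g => ENNReal.toReal_nonneg
  have hmeas_sum : ∑' g : s, μ {(g : G)} = 1 := by
    have h := tsum_measure_preimage_singleton (μ := μ) hsc (f := id)
      (fun y _ => (MeasurableSet.singleton y).preimage measurable_id)
    simpa [hs1] using h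
  have hw_sum : ∑' g : s, w g = 1 := by
    rw [hw, ← ENNReal.tsum_toReal_eq (fun g => measure_ne_top μ _), hmeas_sum]
    simp
  have hw_summable : Summable w := by
    refine ENNReal.summable_toReal ?_
    rw [hmeas_sum]; exact ENNReal.one_ne_top
  have hw_abs : Summable fun g : s => ‖w g‖ := by
    simpa [Real.norm_eq_abs, abs_of_nonneg (hw_nonneg _)] using hw_summable
  have hμcompl : μ sᶜ = 0 := by
    have h := measure_compl hsc.measurableSet (measure_ne_top μ s)
    rw [hs1, measure_univ] at h
    simpa using h
  have hrestrict : μ.restrict s = μ :=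
    Measure.restrict_eq_self_of_ae_mem (by
      rw [ae_iff]; exact hμcompl)
  have hint : ∀ h : PontryaginDual G, Integrable (fun g : G => ((h g : ℂ))) μ := fun h =>
    ⟨(continuous_subtype_val.comp (map_continuous h)).aestronglyMeasurable,
      HasFiniteIntegral.of_bounded (C := 1) (ae_of_all _ fun g => (hnorm h g).le)⟩
  have hF : ∀ h : PontryaginDual G,
      ∫ g, ((h g : ℂ)) ∂μ = ∑' g : s, w g • ((h (g : G) : ℂ)) := by
    intro h
    conv_lhs => rw [← hrestrict]
    exact setIntegral_countable _ hsc (hint h).integrableOn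
  have hconjval : ∀ (h : PontryaginDual G) (g : G),
      ((h g⁻¹ : ℂ)) = (starRingEnd ℂ) ((h g : ℂ)) := by
    intro h g
    rw [map_inv]
    exact Circle.coe_inv_eq_conj _
  have hFconj : ∀ h : PontryaginDual G,
      (starRingEnd ℂ) (∫ g, ((h g : ℂ)) ∂μ) = ∑' g : s, w g • ((h (g : G)⁻¹ : ℂ)) := by
    intro h
    rw [hF h]
    have e := Complex.conjCLE.map_tsum (L := SummationFilter.unconditional _) (f := fun g : s => w g • ((h (g : G) : ℂ)))
    simp only [Complex.conjCLE_apply] at e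
    rw [e]
    refine tsum_congr fun g => ?_
    rw [hconjval h]
    simp
  have hnrm : ∀ (h : PontryaginDual G) (g : s) (x : G), ‖w g • ((h x : ℂ))‖ = w g := by
    intro h g x
    rw [norm_smul, hnorm, Real.norm_eq_abs, abs_of_nonneg (hw_nonneg g), mul_one]
  have hprod : ∀ h : PontryaginDual G,
      (∫ g, ((h g : ℂ)) ∂μ) * (starRingEnd ℂ) (∫ g, ((h g : ℂ)) ∂μ)
        = ∑' p : s × s, (w p.1 * w p.2) • ((h ((p.1 : G) * (p.2 : G)⁻¹) : ℂ)) := by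
    intro h
    have hs1' : Summable fun g : s => ‖w g • ((h (g : G) : ℂ))‖ := by
      refine hw_summable.congr fun g => ?_
      rw [hnrm h g]
    have hs2' : Summable fun g : s => ‖w g • ((h (g : G)⁻¹ : ℂ))‖ := by
      refine hw_summable.congr fun g => ?_
      rw [hnrm h g]
    rw [hFconj h, hF h, tsum_mul_tsum_of_summable_norm hs1' hs2']
    refine tsum_congr fun p => ?_
    rw [smul_mul_smul_comm]
    congr 1
    rw [map_mul, Circle.coe_mul]
  have hsum_norm : Summable fun p : s × s => ‖w p.1 * w p.2‖ := hw_abs.mul_norm hw_abs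
  have hsum_bound : Summable fun p : s × s => w p.1 * w p.2 := by
    refine hsum_norm.congr fun p => ?_
    rw [Real.norm_eq_abs, abs_of_nonneg (mul_nonneg (hw_nonneg _) (hw_nonneg _))]
  have hswap : ∀ N, ∫ h, (∑' p : s × s,
        (w p.1 * w p.2) • ((h ((p.1 : G) * (p.2 : G)⁻¹) : ℂ))) ∂ν N
      = ∑' p : s × s, (w p.1 * w p.2) • ∫ h, ((h ((p.1 : G) * (p.2 : G)⁻¹) : ℂ)) ∂ν N := by
    intro N
    rw [integral_tsum (f := fun (p : s × s) (h : PontryaginDual G) =>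
        (w p.1 * w p.2) • ((h ((p.1 : G) * (p.2 : G)⁻¹) : ℂ)))
      (fun p => Continuous.aestronglyMeasurable (by exact (heval _).const_smul (w p.1 * w p.2))) ?_]
    · exact tsum_congr fun p => integral_smul _ _
    · have hpt : ∀ (p : s × s) (h : PontryaginDual G),
          (‖(w p.1 * w p.2) • ((h ((p.1 : G) * (p.2 : G)⁻¹) : ℂ))‖₊ : ℝ≥0∞)
            = (‖w p.1 * w p.2‖₊ : ℝ≥0∞) := by
        intro p h
        have : ‖(w p.1 * w p.2) • ((h ((p.1 : G) * (p.2 : G)⁻¹) : ℂ))‖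
            = ‖w p.1 * w p.2‖ := by
          rw [norm_smul, hnorm, mul_one]
        exact congrArg _ (NNReal.eq (by simpa [coe_nnnorm] using this))
      have hsum_nn : Summable fun p : s × s => ‖w p.1 * w p.2‖₊ := by
        rw [← NNReal.summable_coe]
        simpa [coe_nnnorm] using hsum_norm
      have : ∑' p : s × s, ∫⁻ h, ‖(w p.1 * w p.2) •
            ((h ((p.1 : G) * (p.2 : G)⁻¹) : ℂ))‖₊ ∂ν N
          = ∑' p : s × s, (‖w p.1 * w p.2‖₊ : ℝ≥0∞) := by
        refine tsum_congr fun p => ?_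
        rw [lintegral_congr (hpt p), lintegral_const, measure_univ, mul_one]
      refine ne_of_eq_of_ne this ?_
      exact ENNReal.tsum_coe_ne_top_iff_summable.2 hsum_nn
  have hterm : ∀ p : s × s,
      Tendsto (fun N => (w p.1 * w p.2) • ∫ h, ((h ((p.1 : G) * (p.2 : G)⁻¹) : ℂ)) ∂ν N)
        atTop (𝓝 (((w p.1 * w p.2 : ℝ) : ℂ))) := by
    intro p
    by_cases h1 : μ {(p.1 : G)} = 0
    · have hz : w p.1 = 0 := by rw [hw]; simp [h1]
      simp only [hz, zero_mul, zero_smul, Complex.ofReal_zero]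
      exact tendsto_const_nhds
    · by_cases h2 : μ {(p.2 : G)} = 0
      · have hz : w p.2 = 0 := by rw [hw]; simp [h2]
        simp only [hz, mul_zero, zero_smul, Complex.ofReal_zero]
        exact tendsto_const_nhds
      · have ht := (hgood ((p.1 : G) * (p.2 : G)⁻¹)).const_smul (w p.1 * w p.2)
        rw [hatoms _ _ h1 h2] at ht
        simpa [Complex.real_smul] using ht
  have hbnd : ∀ N (p : s × s),
      ‖(w p.1 * w p.2) • ∫ h, ((h ((p.1 : G) * (p.2 : G)⁻¹) : ℂ)) ∂ν N‖ ≤ w p.1 * w p.2 := by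
    intro N p
    haveI := hν N
    rw [norm_smul, Real.norm_eq_abs, abs_of_nonneg (mul_nonneg (hw_nonneg _) (hw_nonneg _))]
    have hle : ‖∫ h, ((h ((p.1 : G) * (p.2 : G)⁻¹) : ℂ)) ∂ν N‖ ≤ 1 := by
      have h := norm_integral_le_of_norm_le_const (μ := ν N)
        (f := fun h : PontryaginDual G => ((h ((p.1 : G) * (p.2 : G)⁻¹) : ℂ))) (C := 1)
        (ae_of_all _ fun h => (hnorm h _).le)
      simpa using h
    calc w p.1 * w p.2 * ‖∫ h, ((h ((p.1 : G) * (p.2 : G)⁻¹) : ℂ)) ∂ν N‖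
        ≤ w p.1 * w p.2 * 1 :=
          mul_le_mul_of_nonneg_left hle (mul_nonneg (hw_nonneg _) (hw_nonneg _))
      _ = w p.1 * w p.2 := mul_one _
  have hmain := tendsto_tsum_of_dominated_convergence (𝓕 := atTop) hsum_bound hterm
      (Eventually.of_forall fun N p => hbnd N p)
  have hone : (∑' p : s × s, ((w p.1 * w p.2 : ℝ) : ℂ)) = 1 := by
    have hr : (∑' p : s × s, (w p.1 * w p.2)) = 1 := by
      rw [← tsum_mul_tsum_of_summable_norm hw_abs hw_abs, hw_sum, one_mul]
    have hmap := Complex.ofRealCLM.map_tsum hsum_bound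
    simp only [Complex.ofRealCLM_apply] at hmap
    rw [← hmap, hr, Complex.ofReal_one]
  rw [hone] at hmain
  have hCint : ∀ N, ((∫ h, ‖∫ g, ((h g : ℂ)) ∂μ‖ ^ 2 ∂ν N : ℝ) : ℂ)
      = ∑' p : s × s, (w p.1 * w p.2) • ∫ h, ((h ((p.1 : G) * (p.2 : G)⁻¹) : ℂ)) ∂ν N := by
    intro N
    rw [show (((∫ h, ‖∫ g, ((h g : ℂ)) ∂μ‖ ^ 2 ∂ν N : ℝ)) : ℂ)
        = ∫ h, ((‖∫ g, ((h g : ℂ)) ∂μ‖ ^ 2 : ℝ) : ℂ) ∂ν N from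
      (integral_ofReal (𝕜 := ℂ)).symm, ← hswap N]
    congr 1
    funext h
    rw [← hprod h, Complex.mul_conj']
    norm_cast
  have h2 : Tendsto (fun N => ((∫ h, ‖∫ g, ((h g : ℂ)) ∂μ‖ ^ 2 ∂ν N : ℝ) : ℂ))
      atTop (𝓝 1) := by
    simp only [hCint]
    exact hmain
  have h3 := (Complex.continuous_re.tendsto 1).comp h2
  simpa [Function.comp_def] using h3
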